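/- Pathwise r-variation bound via sewing: let (F_{s,t})_{s≤t} be a two-parameter process with F_{s,s} = 0 and (g_t) a one-parameter process (discrete time), and suppose the structural identity F_{s,u} − F_{t,u} = Σ_{i=1}^{I} F^i_{s,t} · F̃^i_{t,u} holds for all s ≤ t ≤ u, with two-parameter processes F^i, F̃^i. Let ρ < 1 and suppose 1/ρ = 1/p_{i,0} + 1/p_{i,1} for each i. Then V^ρ Π(F,g) ≤ C Σ_i (V^{p_{i,1}} F^i) · (V^{p_{i,0}} Π(F̃^i,g)), pointwise on Ω, where Π(F,g)_{s,t} := Σ_{s<j≤t} F_{s,j-1}(g_j − g_{j-1}). -/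

import Mathlib

open ENNReal

/-- The `r`-variation of a discrete-time two-parameter process. -/
noncomputable def VvarN (r : ℝ) (P : ℕ → ℕ → ℝ) : ℝ≥0∞ :=
  ⨆ (L : ℕ) (u : Fin (L + 1) → ℕ) (_ : Monotone u),
    (∑ l : Fin L, (ENNReal.ofReal |P (u l.castSucc) (u l.succ)|) ^ r) ^ (1 / r)

/-- Discrete-time paraproduct `Π(F,g)_{s,t} = Σ_{s<j≤t} F_{s,j-1} (g_j - g_{j-1})`. -/
noncomputable def pp (F : ℕ → ℕ → ℝ) (g : ℕ → ℝ) (s t : ℕ) : ℝ :=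
  ∑ j ∈ Finset.Ioc s t, F s (j - 1) * (g j - g (j - 1))

open Finset

/-- A pinned partition of `[s,t]`: data `(L, u)` with `u` monotone, `u 0 = s`,
`u n = t` for `n ≥ L`. -/
def IsPart (s t : ℕ) (c : ℕ × (ℕ → ℕ)) : Prop :=
  Monotone c.2 ∧ c.2 0 = s ∧ ∀ n, c.1 ≤ n → c.2 n = t

/-- Localized variation sum (no outer power), over partitions pinned to `[s,t]`. -/
noncomputable def Vloc (r : ℝ) (P : ℕ → ℕ → ℝ) (s t : ℕ) : ℝ≥0∞ :=
  ⨆ (c : ℕ × (ℕ → ℕ)) (_ : IsPart s t c),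
    ∑ l ∈ Finset.range c.1, (ENNReal.ofReal |P (c.2 l) (c.2 (l+1))|) ^ r

lemma isPart_single {s t : ℕ} (hst : s ≤ t) :
    IsPart s t (1, fun n => if n = 0 then s else t) := by
  refine ⟨?_, by simp, ?_⟩
  · intro a b hab; dsimp only; split <;> split <;> omega
  · intro n hn; simp only [ite_eq_right_iff]; omega

lemma le_Vloc (r : ℝ) (P : ℕ → ℕ → ℝ) (s t : ℕ) (c : ℕ × (ℕ → ℕ)) (hc : IsPart s t c) :
    ∑ l ∈ Finset.range c.1, (ENNReal.ofReal |P (c.2 l) (c.2 (l+1))|) ^ r ≤ Vloc r P s t :=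
  le_iSup_of_le c (le_iSup_of_le hc le_rfl)

lemma single_le_Vloc (r : ℝ) (P : ℕ → ℕ → ℝ) {s t : ℕ} (hst : s ≤ t) :
    (ENNReal.ofReal |P s t|) ^ r ≤ Vloc r P s t := by
  simpa using le_Vloc r P s t _ (isPart_single hst)

lemma Vloc_superadd (r : ℝ) (P : ℕ → ℕ → ℝ) {s t u : ℕ} (hst : s ≤ t) (htu : t ≤ u) :
    Vloc r P s t + Vloc r P t u ≤ Vloc r P s u := by
  rw [Vloc, Vloc]
  refine ENNReal.biSup_add_biSup_le' ⟨_, isPart_single hst⟩ ⟨_, isPart_single htu⟩ ?_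
  rintro ⟨L, v⟩ ⟨hv, hv0, hvL⟩ ⟨L', w⟩ ⟨hw, hw0, hwL⟩
  simp only at hv hv0 hvL hw hw0 hwL ⊢
  set z : ℕ → ℕ := fun n => if n < L then v n else w (n - L) with hz
  have hzval' : ∀ l, L ≤ l → z l = w (l - L) := by
    intro l hl
    rw [hz]; simp only; rw [if_neg (by omega)]
  have hzval : ∀ l, l ≤ L → z l = v l := by
    intro l hl
    rcases lt_or_eq_of_le hl with h | h
    · simp [hz, h]
    · rw [hzval' l (by omega), h, Nat.sub_self, hw0]
      exact (hvL L le_rfl).symm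
  have hzmono : Monotone z := by
    intro a b hab
    rcases lt_or_ge a L with ha | ha
    · rcases lt_or_ge b L with hb | hb
      · rw [hzval a (by omega), hzval b (by omega)]; exact hv hab
      · rw [hzval a (by omega), hzval' b hb]
        calc v a ≤ v L := hv (le_of_lt ha)
        _ = t := hvL L le_rfl
        _ = w 0 := hw0.symm
        _ ≤ w (b - L) := hw (Nat.zero_le _)
    · rw [hzval' a ha, hzval' b (le_trans ha hab)]
      exact hw (by omega)
  have h0 : z 0 = s := by
    rw [hzval 0 (Nat.zero_le _)]; exact hv0
  have hend : ∀ n, L + L' ≤ n → z n = u := by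
    intro n hn
    rw [hzval' n (by omega)]
    exact hwL _ (by omega)
  refine le_trans ?_ (le_Vloc r P s u (L + L', z) ⟨hzmono, h0, hend⟩)
  simp only
  rw [Finset.range_add, Finset.sum_union (by
    simp only [Finset.disjoint_left, Finset.mem_range, Finset.mem_map,
      addLeftEmbedding_apply]
    intro a ha; push_neg; intro b hb; omega)]
  refine add_le_add (le_of_eq ?_) (le_of_eq ?_)
  · apply Finset.sum_congr rfl
    intro l hl
    simp only [Finset.mem_range] at hl
    rw [hzval l (by omega), hzval (l+1) (by omega)]
  · rw [Finset.sum_map]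
    apply Finset.sum_congr rfl
    intro l hl
    simp only [Finset.mem_range] at hl
    simp only [addLeftEmbedding_apply]
    rw [hzval' (L + l) (by omega), hzval' (L + l + 1) (by omega)]
    have e1 : L + l - L = l := by omega
    have e2 : L + l + 1 - L = l + 1 := by omega
    rw [e1, e2]

section Superadd
variable {ω : ℕ → ℕ → ℝ≥0∞}
  (hsup : ∀ s t u : ℕ, s ≤ t → t ≤ u → ω s t + ω t u ≤ ω s u)

include hsup

lemma superadd_mono {s s' t' t : ℕ} (h1 : s ≤ s') (h2 : s' ≤ t') (h3 : t' ≤ t) :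
    ω s' t' ≤ ω s t :=
  calc ω s' t' ≤ ω s s' + ω s' t' := le_add_self
  _ ≤ ω s t' := hsup s s' t' h1 h2
  _ ≤ ω s t' + ω t' t := le_self_add
  _ ≤ ω s t := hsup s t' t (h1.trans h2) h3

lemma superadd_chain (w : ℕ → ℕ) (hw : Monotone w) (J : ℕ) :
    ∑ j ∈ Finset.range J, ω (w j) (w (j+1)) ≤ ω (w 0) (w J) := by
  induction J with
  | zero => simpa using le_add_self.trans (hsup (w 0) (w 0) (w 0) le_rfl le_rfl)
  | succ J ih =>
    rw [Finset.sum_range_succ]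
    calc _ ≤ ω (w 0) (w J) + ω (w J) (w (J+1)) := add_le_add ih le_rfl
    _ ≤ _ := hsup _ _ _ (hw (Nat.zero_le _)) (hw (by omega))

end Superadd

lemma sum_rpow_le_rpow_sum {ι : Type*} (s : Finset ι) (f : ι → ℝ≥0∞) {q : ℝ} (hq : 1 ≤ q) :
    ∑ i ∈ s, f i ^ q ≤ (∑ i ∈ s, f i) ^ q := by
  classical
  induction s using Finset.induction with
  | empty => simp [ENNReal.zero_rpow_of_pos (by linarith : (0:ℝ) < q)]
  | insert _ _ hx ih =>
    rw [Finset.sum_insert hx, Finset.sum_insert hx]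
    exact le_trans (add_le_add le_rfl ih) (ENNReal.add_rpow_le_rpow_add _ _ hq)

/-- two-point reverse Hölder: `x^θ y^(1-θ) + x'^θ y'^(1-θ) ≤ (x+x')^θ (y+y')^(1-θ)`. -/
lemma geom_superadd {θ : ℝ} (hθ : 0 < θ) (hθ1 : θ < 1) (x y x' y' : ℝ≥0∞) :
    x ^ θ * y ^ (1-θ) + x' ^ θ * y' ^ (1-θ) ≤ (x + x') ^ θ * (y + y') ^ (1-θ) := by
  have hpq : (1/θ).HolderConjugate (1/(1-θ)) := by
    rw [Real.holderConjugate_iff]; constructor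
    · rw [lt_div_iff₀ hθ]; linarith
    · rw [one_div, one_div, inv_inv, inv_inv]; ring
  have := ENNReal.inner_le_Lp_mul_Lq (Finset.univ : Finset (Fin 2))
    (fun b => if b = 0 then x ^ θ else x' ^ θ)
    (fun b => if b = 0 then y ^ (1-θ) else y' ^ (1-θ)) hpq
  simp only [Fin.sum_univ_two] at this
  norm_num at this
  refine le_trans this (le_of_eq ?_)
  rw [← ENNReal.rpow_mul x, ← ENNReal.rpow_mul x', ← ENNReal.rpow_mul y,
    ← ENNReal.rpow_mul y', mul_inv_cancel₀ (ne_of_gt hθ),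
    mul_inv_cancel₀ (by linarith : 1 - θ ≠ 0),
    ENNReal.rpow_one, ENNReal.rpow_one, ENNReal.rpow_one, ENNReal.rpow_one]

/-- Removing the point of index `j+1` from a partition with `L+1` intervals. -/
lemma remove_point_sum (Φ : ℕ → ℕ → ℝ) (u : ℕ → ℕ) (L j : ℕ) (hj : j < L) :
    ∑ l ∈ Finset.range (L+1), Φ (u l) (u (l+1))
      = (∑ l ∈ Finset.range L, Φ ((fun n => if n < j+1 then u n else u (n+1)) l)
          ((fun n => if n < j+1 then u n else u (n+1)) (l+1)))
        + (Φ (u j) (u (j+1)) + Φ (u (j+1)) (u (j+2)) - Φ (u j) (u (j+2))) := by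
  set v : ℕ → ℕ := fun n => if n < j+1 then u n else u (n+1) with hv
  set f : ℕ → ℝ := fun l => Φ (u l) (u (l+1)) with hf
  set M := L - (j+1) with hM
  have hA : ∑ l ∈ Finset.range (L+1), f l
      = (∑ l ∈ Finset.range j, f l) + f j + f (j+1) + ∑ l ∈ Finset.range M, f (j+2+l) := by
    have h1 : j + 2 ≤ L + 1 := by omega
    have tail : ∑ i ∈ Finset.Ico (j+2) (L+1), f i = ∑ l ∈ Finset.range M, f (j+2+l) := by
      rw [Finset.sum_Ico_eq_sum_range]
      have h2 : L + 1 - (j + 2) = M := by omega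
      rw [h2]
    rw [Finset.range_eq_Ico, ← Finset.sum_Ico_consecutive _ (Nat.zero_le (j+2)) h1, tail,
      ← Finset.range_eq_Ico, Finset.sum_range_succ, Finset.sum_range_succ]
  have hB : ∑ l ∈ Finset.range L, Φ (v l) (v (l+1))
      = (∑ l ∈ Finset.range j, f l) + Φ (u j) (u (j+2)) + ∑ l ∈ Finset.range M, f (j+2+l) := by
    have h1 : j + 1 ≤ L := by omega
    have tail : ∑ i ∈ Finset.Ico (j+1) L, Φ (v i) (v (i+1))
        = ∑ l ∈ Finset.range M, Φ (v (j+1+l)) (v (j+1+l+1)) := by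
      rw [Finset.sum_Ico_eq_sum_range]
    rw [Finset.range_eq_Ico, ← Finset.sum_Ico_consecutive _ (Nat.zero_le (j+1)) h1, tail,
      ← Finset.range_eq_Ico, Finset.sum_range_succ]
    have e1 : ∑ l ∈ Finset.range j, Φ (v l) (v (l+1)) = ∑ l ∈ Finset.range j, f l := by
      apply Finset.sum_congr rfl
      intro l hl
      simp only [Finset.mem_range] at hl
      rw [hv]; simp only
      rw [if_pos (by omega), if_pos (by omega)]
    have e2 : Φ (v j) (v (j+1)) = Φ (u j) (u (j+2)) := by
      rw [hv]; simp only
      rw [if_pos (by omega), if_neg (by omega)]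
    have e3 : ∀ l, Φ (v (j+1+l)) (v (j+1+l+1)) = f (j+2+l) := by
      intro l
      rw [hv, hf]; simp only
      rw [if_neg (by omega), if_neg (by omega)]
      congr 2 <;> omega
    rw [e1, e2, Finset.sum_congr rfl (fun l _ => e3 l)]
  rw [hA, hB, hf]
  simp only
  ring

/-- The discrete sewing lemma. -/
lemma sewing (Φ : ℕ → ℕ → ℝ) (ω : ℕ → ℕ → ℝ≥0∞) (q : ℝ) (hq : 1 ≤ q)
    (hsup : ∀ s t u : ℕ, s ≤ t → t ≤ u → ω s t + ω t u ≤ ω s u)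
    (hδ : ∀ s t u : ℕ, s ≤ t → t ≤ u →
      ENNReal.ofReal |Φ s u - Φ s t - Φ t u| ≤ ω s u ^ q)
    (hΦ1 : ∀ n, Φ n (n+1) = 0) (hΦ0 : ∀ n, Φ n n = 0) :
    ∀ s t : ℕ, s ≤ t →
      ENNReal.ofReal |Φ s t| ≤ (∑' m : ℕ, (2 / ((m:ℝ≥0∞)+1)) ^ q) * ω s t ^ q := by
  have hq0 : (0:ℝ) ≤ q := by linarith
  have claim : ∀ L : ℕ, ∀ s t : ℕ, ∀ u : ℕ → ℕ, Monotone u → u 0 = s →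
      (∀ n, L ≤ n → u n = t) →
      ENNReal.ofReal |Φ s t - ∑ l ∈ Finset.range L, Φ (u l) (u (l+1))|
        ≤ ∑ m ∈ Finset.range (L-1), ((2 / ((m:ℝ≥0∞)+1)) * ω s t) ^ q := by
    intro L
    induction L with
    | zero =>
      intro s t u hu h0 hL
      have hst : s = t := by rw [← h0, hL 0 le_rfl]
      simp [← hst, hΦ0 s]
    | succ L IH =>
      rcases Nat.eq_zero_or_pos L with rfl | hL1
      · intro s t u hu h0 hL
        have h1 : u 1 = t := hL 1 le_rfl
        simp [h0, h1]
      -- main inductive step, L ≥ 1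
      intro s t u hu h0 hL
      have hut : ∀ n, u n ≤ t := by
        intro n
        calc u n ≤ u (n + (L+1)) := hu (by omega)
        _ = t := hL _ (by omega)
      have hst : s ≤ t := by rw [← h0]; exact hut 0
      set J := (L+1)/2 with hJdef
      have hJ1 : 1 ≤ J := by omega
      obtain ⟨j₀, hj₀mem, hj₀min⟩ := Finset.exists_min_image (Finset.range J)
        (fun j => ω (u (2*j)) (u (2*j+2))) ⟨0, Finset.mem_range.2 (by omega)⟩
      rw [Finset.mem_range] at hj₀mem
      -- chain bound
      have hchain : ∑ j ∈ Finset.range J, ω (u (2*j)) (u (2*j+2)) ≤ ω s t := by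
        have hmono2 : Monotone (fun n => u (2*n)) := fun a b hab => hu (by omega)
        have h1 := superadd_chain hsup (fun n => u (2*n)) hmono2 J
        have he : ∀ j : ℕ, (2*(j+1)) = 2*j+2 := fun j => by ring
        rw [Finset.sum_congr rfl (fun j _ => by rw [he j])] at h1
        refine le_trans h1 (superadd_mono hsup (le_of_eq h0.symm) (hu (Nat.zero_le _))
          (hut _))
      have hmin : (J:ℝ≥0∞) * ω (u (2*j₀)) (u (2*j₀+2)) ≤ ω s t := by
        calc (J:ℝ≥0∞) * ω (u (2*j₀)) (u (2*j₀+2))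
            = (Finset.range J).card • ω (u (2*j₀)) (u (2*j₀+2)) := by
              rw [Finset.card_range, nsmul_eq_mul]
        _ ≤ ∑ j ∈ Finset.range J, ω (u (2*j)) (u (2*j+2)) :=
            Finset.card_nsmul_le_sum _ _ _ (fun j hj => hj₀min j hj)
        _ ≤ ω s t := hchain
      have hkey : ω (u (2*j₀)) (u (2*j₀+2)) ≤ (2/(L:ℝ≥0∞)) * ω s t := by
        have hL0 : ((L:ℝ≥0∞)) ≠ 0 := Nat.cast_ne_zero.2 (by omega)
        rw [div_eq_mul_inv, mul_assoc, mul_comm ((L:ℝ≥0∞))⁻¹ (ω s t), ← mul_assoc,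
          ← div_eq_mul_inv]
        rw [ENNReal.le_div_iff_mul_le (Or.inl hL0) (Or.inl (ENNReal.natCast_ne_top L))]
        calc ω (u (2*j₀)) (u (2*j₀+2)) * (L:ℝ≥0∞)
            = (L:ℝ≥0∞) * ω (u (2*j₀)) (u (2*j₀+2)) := mul_comm _ _
        _ ≤ ((2*J : ℕ):ℝ≥0∞) * ω (u (2*j₀)) (u (2*j₀+2)) := by
            gcongr
            have h2J : L ≤ 2 * J := by rw [hJdef]; omega
            exact Nat.cast_le.2 h2J
        _ = 2 * ((J:ℝ≥0∞) * ω (u (2*j₀)) (u (2*j₀+2))) := by push_cast; ring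
        _ ≤ 2 * ω s t := by gcongr
      -- remove the point of index 2*j₀+1
      set j := 2*j₀ with hjdef
      have hjL : j < L := by omega
      set u' : ℕ → ℕ := fun n => if n < j+1 then u n else u (n+1) with hu'def
      have hu'mono : Monotone u' := by
        intro a b hab
        rw [hu'def]
        simp only
        split <;> split <;> exact hu (by omega)
      have hu'0 : u' 0 = s := by rw [hu'def]; simp only [if_pos (by omega : 0 < j+1)]; exact h0
      have hu'L : ∀ n, L ≤ n → u' n = t := by
        intro n hn
        rw [hu'def]; simp only [if_neg (by omega : ¬ n < j+1)]
        exact hL _ (by omega)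
      have hid := remove_point_sum Φ u L j hjL
      have hsplit : Φ s t - ∑ l ∈ Finset.range (L+1), Φ (u l) (u (l+1))
          = (Φ s t - ∑ l ∈ Finset.range L, Φ (u' l) (u' (l+1)))
            - (Φ (u j) (u (j+1)) + Φ (u (j+1)) (u (j+2)) - Φ (u j) (u (j+2))) := by
        rw [hid, hu'def]; ring
      calc ENNReal.ofReal |Φ s t - ∑ l ∈ Finset.range (L+1), Φ (u l) (u (l+1))|
          ≤ ENNReal.ofReal (|Φ s t - ∑ l ∈ Finset.range L, Φ (u' l) (u' (l+1))|
              + |Φ (u j) (u (j+1)) + Φ (u (j+1)) (u (j+2)) - Φ (u j) (u (j+2))|) := by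
            apply ENNReal.ofReal_le_ofReal
            rw [hsplit]
            exact abs_sub _ _
      _ = ENNReal.ofReal |Φ s t - ∑ l ∈ Finset.range L, Φ (u' l) (u' (l+1))|
            + ENNReal.ofReal |Φ (u j) (u (j+1)) + Φ (u (j+1)) (u (j+2)) - Φ (u j) (u (j+2))| :=
            ENNReal.ofReal_add (abs_nonneg _) (abs_nonneg _)
      _ ≤ (∑ m ∈ Finset.range (L-1), ((2 / ((m:ℝ≥0∞)+1)) * ω s t) ^ q)
            + ((2/(L:ℝ≥0∞)) * ω s t) ^ q := by
            refine add_le_add (IH s t u' hu'mono hu'0 hu'L) ?_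
            have habs : |Φ (u j) (u (j+1)) + Φ (u (j+1)) (u (j+2)) - Φ (u j) (u (j+2))|
                = |Φ (u j) (u (j+2)) - Φ (u j) (u (j+1)) - Φ (u (j+1)) (u (j+2))| := by
              rw [abs_sub_comm]; congr 1; ring
            rw [habs]
            refine le_trans (hδ (u j) (u (j+1)) (u (j+2)) (hu (by omega)) (hu (by omega))) ?_
            exact ENNReal.rpow_le_rpow hkey hq0
      _ ≤ ∑ m ∈ Finset.range (L+1-1), ((2 / ((m:ℝ≥0∞)+1)) * ω s t) ^ q := by
            have hL' : L + 1 - 1 = (L-1) + 1 := by omega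
            rw [hL', Finset.sum_range_succ]
            gcongr
            apply le_of_eq
            congr 2
            rw [← Nat.cast_one (R:=ℝ≥0∞), ← Nat.cast_add, (by omega : L - 1 + 1 = L)]
  -- conclude
  intro s t hst
  rcases eq_or_lt_of_le hst with rfl | hlt
  · simp [hΦ0 s]
  set L := t - s with hLdef
  have hc := claim L s t (fun n => min (s+n) t)
    (fun a b hab => by simp only; omega)
    (by omega)
    (fun n hn => by omega)
  have hzero : ∑ l ∈ Finset.range L, Φ (min (s+l) t) (min (s+(l+1)) t) = 0 := by
    apply Finset.sum_eq_zero
    intro l hl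
    simp only [Finset.mem_range] at hl
    have e1 : min (s+l) t = s + l := by omega
    have e2 : min (s+(l+1)) t = s+(l+1) := by omega
    rw [e1, e2]
    exact hΦ1 _
  beta_reduce at hc
  rw [hzero, sub_zero] at hc
  refine le_trans hc ?_
  calc ∑ m ∈ Finset.range (L-1), ((2 / ((m:ℝ≥0∞)+1)) * ω s t) ^ q
      = ∑ m ∈ Finset.range (L-1), (2 / ((m:ℝ≥0∞)+1)) ^ q * ω s t ^ q := by
        refine Finset.sum_congr rfl (fun m _ => ?_)
        exact ENNReal.mul_rpow_of_nonneg _ _ hq0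
  _ = (∑ m ∈ Finset.range (L-1), (2 / ((m:ℝ≥0∞)+1)) ^ q) * ω s t ^ q := by
        rw [Finset.sum_mul]
  _ ≤ (∑' m : ℕ, (2 / ((m:ℝ≥0∞)+1)) ^ q) * ω s t ^ q := by
        gcongr
        exact ENNReal.sum_le_tsum _

lemma K_lt_top {q : ℝ} (hq : 1 < q) : (∑' m : ℕ, (2 / ((m:ℝ≥0∞)+1)) ^ q) < ∞ := by
  have hterm : ∀ m : ℕ, (2 / ((m:ℝ≥0∞)+1)) ^ q
      = ENNReal.ofReal ((2 / ((m:ℝ)+1)) ^ q) := by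
    intro m
    have h1 : (2:ℝ≥0∞) / ((m:ℝ≥0∞)+1) = ENNReal.ofReal (2 / ((m:ℝ)+1)) := by
      rw [ENNReal.ofReal_div_of_pos (by positivity)]
      congr 1
      · norm_num
      · rw [ENNReal.ofReal_add (by positivity) (by norm_num)]
        simp
    rw [h1, ← ENNReal.ofReal_rpow_of_nonneg (by positivity) (by linarith)]
  have hsum : Summable (fun m : ℕ => (2 / ((m:ℝ)+1)) ^ q) := by
    have h1 : Summable (fun n : ℕ => (1 : ℝ) / (n:ℝ) ^ q) :=
      Real.summable_one_div_nat_rpow.2 hq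
    have h2 : Summable (fun m : ℕ => (1 : ℝ) / ((m+1:ℕ):ℝ) ^ q) :=
      (summable_nat_add_iff 1).2 h1
    have h3 : Summable (fun m : ℕ => (2:ℝ) ^ q * (1 / ((m+1:ℕ):ℝ) ^ q)) := h2.mul_left _
    refine h3.congr (fun m => ?_)
    push_cast
    rw [Real.div_rpow (by norm_num) (by positivity)]
    ring
  rw [tsum_congr hterm, ← ENNReal.ofReal_tsum_of_nonneg (fun m => by positivity) hsum]
  exact ENNReal.ofReal_lt_top

open Finset in
lemma pp_delta {I : ℕ} (F : ℕ → ℕ → ℝ) (g : ℕ → ℝ) (Fi Fti : Fin I → ℕ → ℕ → ℝ)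
    (hstruct : ∀ s t u : ℕ, s ≤ t → t ≤ u →
      F s u - F t u = ∑ i : Fin I, Fi i s t * Fti i t u)
    {s t u : ℕ} (hst : s ≤ t) (htu : t ≤ u) :
    pp F g s u - pp F g s t - pp F g t u = ∑ i : Fin I, Fi i s t * pp (Fti i) g t u := by
  unfold pp
  rw [← Finset.sum_Ioc_consecutive _ hst htu]
  have h1 : ∀ j ∈ Finset.Ioc t u, F s (j-1) * (g j - g (j-1)) - F t (j-1) * (g j - g (j-1))
      = ∑ i : Fin I, Fi i s t * (Fti i t (j-1) * (g j - g (j-1))) := by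
    intro j hj
    rw [Finset.mem_Ioc] at hj
    rw [← sub_mul, hstruct s t (j-1) hst (by omega), Finset.sum_mul]
    exact Finset.sum_congr rfl (fun i _ => by ring)
  calc (∑ j ∈ Finset.Ioc s t, F s (j-1) * (g j - g (j-1))
        + ∑ j ∈ Finset.Ioc t u, F s (j-1) * (g j - g (j-1)))
      - ∑ j ∈ Finset.Ioc s t, F s (j-1) * (g j - g (j-1))
      - ∑ j ∈ Finset.Ioc t u, F t (j-1) * (g j - g (j-1))
      = ∑ j ∈ Finset.Ioc t u, (F s (j-1) * (g j - g (j-1)) - F t (j-1) * (g j - g (j-1))) := by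
        rw [Finset.sum_sub_distrib]; ring
  _ = ∑ j ∈ Finset.Ioc t u, ∑ i : Fin I, Fi i s t * (Fti i t (j-1) * (g j - g (j-1))) :=
        Finset.sum_congr rfl h1
  _ = ∑ i : Fin I, Fi i s t * ∑ j ∈ Finset.Ioc t u, Fti i t (j-1) * (g j - g (j-1)) := by
        rw [Finset.sum_comm]
        exact Finset.sum_congr rfl (fun i _ => by rw [Finset.mul_sum])

lemma Vloc_le_VvarN (r : ℝ) (hr : 0 < r) (P : ℕ → ℕ → ℝ) (s t : ℕ) :
    Vloc r P s t ≤ (VvarN r P) ^ r := by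
  refine iSup_le fun c => iSup_le fun hc => ?_
  obtain ⟨hmono, -, -⟩ := hc
  set f : ℕ → ℝ≥0∞ := fun m => (ENNReal.ofReal |P (c.2 m) (c.2 (m+1))|) ^ r with hf
  have hfin : ∀ l : Fin c.1,
      (ENNReal.ofReal |P ((fun m : Fin (c.1+1) => c.2 m.val) l.castSucc)
        ((fun m : Fin (c.1+1) => c.2 m.val) l.succ)|) ^ r = f l.val := by
    intro l
    simp only [hf, Fin.coe_castSucc, Fin.val_succ]
  have h1 : (∑ l ∈ Finset.range c.1, f l) ^ (1/r) ≤ VvarN r P := by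
    rw [← Fin.sum_univ_eq_sum_range f c.1]
    rw [VvarN]
    refine le_iSup_of_le c.1 (le_iSup_of_le (fun m : Fin (c.1+1) => c.2 m.val)
      (le_iSup_of_le (fun a b hab => hmono hab) ?_))
    rw [Finset.sum_congr rfl (fun l _ => hfin l)]
  calc ∑ l ∈ Finset.range c.1, f l
      = ((∑ l ∈ Finset.range c.1, f l) ^ (1/r)) ^ r := by
        rw [← ENNReal.rpow_mul, one_div, inv_mul_cancel₀ (ne_of_gt hr), ENNReal.rpow_one]
  _ ≤ (VvarN r P) ^ r := ENNReal.rpow_le_rpow h1 (le_of_lt hr)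

/-- pathwise `ρ`-variation bound via the sewing lemma, `ρ < 1`:
under the structural identity `F_{s,u} - F_{t,u} = Σ_i F^i_{s,t} F̃^i_{t,u}` and
`1/ρ = 1/p_{i,0} + 1/p_{i,1}`, one has
`V^ρ Π(F,g) ≤ C Σ_i V^{p_{i,1}} F^i · V^{p_{i,0}} Π(F̃^i, g)` pointwise. -/
theorem sewing_variation_bound (I : ℕ) (ρ : ℝ) (p₀ p₁ : Fin I → ℝ)
    (hρ : 0 < ρ) (hρ1 : ρ < 1)
    (hp : ∀ i, 0 < p₀ i ∧ 0 < p₁ i ∧ 1 / ρ = 1 / p₀ i + 1 / p₁ i) :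
    ∃ C : ℝ≥0∞, C < ∞ ∧
      ∀ (F : ℕ → ℕ → ℝ) (g : ℕ → ℝ) (Fi Fti : Fin I → ℕ → ℕ → ℝ),
        (∀ s, F s s = 0) →
        (∀ s t u : ℕ, s ≤ t → t ≤ u →
          F s u - F t u = ∑ i : Fin I, Fi i s t * Fti i t u) →
        VvarN ρ (pp F g)
          ≤ C * ∑ i : Fin I, VvarN (p₁ i) (Fi i) * VvarN (p₀ i) (pp (Fti i) g) := by
  set q : ℝ := 1/ρ with hqdef
  have hq : 1 < q := by rw [hqdef, lt_div_iff₀ hρ]; linarith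
  have hq0 : (0:ℝ) ≤ q := by linarith
  have hqρ : q * ρ = 1 := by rw [hqdef]; field_simp
  set K : ℝ≥0∞ := ∑' m : ℕ, (2 / ((m:ℝ≥0∞)+1)) ^ q with hKdef
  refine ⟨K * (I:ℝ≥0∞) ^ q, ?_, ?_⟩
  · exact ENNReal.mul_lt_top (K_lt_top hq)
      (ENNReal.rpow_lt_top_of_nonneg hq0 (ENNReal.natCast_ne_top I))
  intro F g Fi Fti hF0 hstruct
  -- exponent facts
  have hsum : ∀ i : Fin I, ρ / p₀ i + ρ / p₁ i = 1 := by
    intro i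
    obtain ⟨h0, h1, hc⟩ := hp i
    have h2 := congrArg (fun x => ρ * x) hc
    simp only [mul_add, mul_one_div, div_self (ne_of_gt hρ)] at h2
    linarith
  have hθpos : ∀ i : Fin I, 0 < ρ / p₁ i := fun i => div_pos hρ (hp i).2.1
  have hθ0pos : ∀ i : Fin I, 0 < ρ / p₀ i := fun i => div_pos hρ (hp i).1
  have hθlt1 : ∀ i : Fin I, ρ / p₁ i < 1 := fun i => by
    have := hsum i; have := hθ0pos i; linarith
  have hθc : ∀ i : Fin I, 1 - ρ / p₁ i = ρ / p₀ i := fun i => by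
    have := hsum i; linarith
  have hθq : ∀ i : Fin I, (ρ / p₁ i) * q = 1 / p₁ i := fun i => by
    rw [hqdef, div_mul_div_comm, mul_one, mul_comm (p₁ i) ρ, ← div_div,
      div_self (ne_of_gt hρ)]
  have hθ0q : ∀ i : Fin I, (ρ / p₀ i) * q = 1 / p₀ i := fun i => by
    rw [hqdef, div_mul_div_comm, mul_one, mul_comm (p₀ i) ρ, ← div_div,
      div_self (ne_of_gt hρ)]
  -- the controls
  set Pt : Fin I → ℕ → ℕ → ℝ := fun i => pp (Fti i) g with hPt
  set ωi : Fin I → ℕ → ℕ → ℝ≥0∞ := fun i s t =>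
    (Vloc (p₁ i) (Fi i) s t) ^ (ρ / p₁ i) * (Vloc (p₀ i) (Pt i) s t) ^ (ρ / p₀ i) with hωi
  set ω : ℕ → ℕ → ℝ≥0∞ := fun s t => ∑ i : Fin I, ωi i s t with hω
  have hωsup : ∀ s t u : ℕ, s ≤ t → t ≤ u → ω s t + ω t u ≤ ω s u := by
    intro s t u hst htu
    rw [hω]
    simp only
    rw [← Finset.sum_add_distrib]
    refine Finset.sum_le_sum fun i _ => ?_
    rw [hωi]
    simp only
    rw [← hθc i]
    calc (Vloc (p₁ i) (Fi i) s t) ^ (ρ / p₁ i) * (Vloc (p₀ i) (Pt i) s t) ^ (1 - ρ / p₁ i)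
        + (Vloc (p₁ i) (Fi i) t u) ^ (ρ / p₁ i) * (Vloc (p₀ i) (Pt i) t u) ^ (1 - ρ / p₁ i)
        ≤ (Vloc (p₁ i) (Fi i) s t + Vloc (p₁ i) (Fi i) t u) ^ (ρ / p₁ i)
          * (Vloc (p₀ i) (Pt i) s t + Vloc (p₀ i) (Pt i) t u) ^ (1 - ρ / p₁ i) :=
        geom_superadd (hθpos i) (hθlt1 i) _ _ _ _
    _ ≤ (Vloc (p₁ i) (Fi i) s u) ^ (ρ / p₁ i) * (Vloc (p₀ i) (Pt i) s u) ^ (1 - ρ / p₁ i) :=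
        mul_le_mul' (ENNReal.rpow_le_rpow (Vloc_superadd _ _ hst htu) (le_of_lt (hθpos i)))
          (ENNReal.rpow_le_rpow (Vloc_superadd _ _ hst htu)
            (by rw [hθc i]; exact le_of_lt (hθ0pos i)))
  -- the δ bound
  have hδ : ∀ s t u : ℕ, s ≤ t → t ≤ u →
      ENNReal.ofReal |pp F g s u - pp F g s t - pp F g t u| ≤ ω s u ^ q := by
    intro s t u hst htu
    rw [pp_delta F g Fi Fti hstruct hst htu]
    calc ENNReal.ofReal |∑ i : Fin I, Fi i s t * Pt i t u|
        ≤ ENNReal.ofReal (∑ i : Fin I, |Fi i s t * Pt i t u|) :=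
          ENNReal.ofReal_le_ofReal (Finset.abs_sum_le_sum_abs _ _)
    _ = ∑ i : Fin I, ENNReal.ofReal |Fi i s t * Pt i t u| :=
          ENNReal.ofReal_sum_of_nonneg (fun i _ => abs_nonneg _)
    _ ≤ ∑ i : Fin I, (ωi i s u) ^ q := by
          refine Finset.sum_le_sum fun i _ => ?_
          rw [abs_mul, ENNReal.ofReal_mul (abs_nonneg _)]
          have e1 : (ωi i s u) ^ q
              = (Vloc (p₁ i) (Fi i) s u) ^ (1 / p₁ i) * (Vloc (p₀ i) (Pt i) s u) ^ (1 / p₀ i) := by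
            rw [hωi]
            simp only
            rw [ENNReal.mul_rpow_of_nonneg _ _ hq0, ← ENNReal.rpow_mul, ← ENNReal.rpow_mul,
              hθq i, hθ0q i]
          rw [e1]
          have h2 : ENNReal.ofReal |Fi i s t| ≤ (Vloc (p₁ i) (Fi i) s u) ^ (1 / p₁ i) := by
            have hs := single_le_Vloc (p₁ i) (Fi i) hst
            have hsupV : ∀ a b c : ℕ, a ≤ b → b ≤ c →
                Vloc (p₁ i) (Fi i) a b + Vloc (p₁ i) (Fi i) b c ≤ Vloc (p₁ i) (Fi i) a c :=
              fun a b c hab hbc => Vloc_superadd _ _ hab hbc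
            have hmono : Vloc (p₁ i) (Fi i) s t ≤ Vloc (p₁ i) (Fi i) s u :=
              superadd_mono hsupV le_rfl hst htu
            calc ENNReal.ofReal |Fi i s t|
                = ((ENNReal.ofReal |Fi i s t|) ^ (p₁ i)) ^ (1 / p₁ i) := by
                  rw [← ENNReal.rpow_mul, mul_one_div, div_self (ne_of_gt (hp i).2.1),
                    ENNReal.rpow_one]
            _ ≤ (Vloc (p₁ i) (Fi i) s u) ^ (1 / p₁ i) :=
                  ENNReal.rpow_le_rpow (hs.trans hmono)
                    (le_of_lt (one_div_pos.2 (hp i).2.1))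
          have h3 : ENNReal.ofReal |Pt i t u| ≤ (Vloc (p₀ i) (Pt i) s u) ^ (1 / p₀ i) := by
            have hs := single_le_Vloc (p₀ i) (Pt i) htu
            have hsupV : ∀ a b c : ℕ, a ≤ b → b ≤ c →
                Vloc (p₀ i) (Pt i) a b + Vloc (p₀ i) (Pt i) b c ≤ Vloc (p₀ i) (Pt i) a c :=
              fun a b c hab hbc => Vloc_superadd _ _ hab hbc
            have hmono : Vloc (p₀ i) (Pt i) t u ≤ Vloc (p₀ i) (Pt i) s u :=
              superadd_mono hsupV hst htu le_rfl
            calc ENNReal.ofReal |Pt i t u|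
                = ((ENNReal.ofReal |Pt i t u|) ^ (p₀ i)) ^ (1 / p₀ i) := by
                  rw [← ENNReal.rpow_mul, mul_one_div, div_self (ne_of_gt (hp i).1),
                    ENNReal.rpow_one]
            _ ≤ (Vloc (p₀ i) (Pt i) s u) ^ (1 / p₀ i) :=
                  ENNReal.rpow_le_rpow (hs.trans hmono)
                    (le_of_lt (one_div_pos.2 (hp i).1))
          exact mul_le_mul' h2 h3
    _ ≤ (∑ i : Fin I, ωi i s u) ^ q := sum_rpow_le_rpow_sum _ _ (le_of_lt hq)
    _ = ω s u ^ q := by rw [hω]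
  -- single steps vanish
  have hΦ1 : ∀ n : ℕ, pp F g n (n+1) = 0 := by
    intro n
    rw [pp]
    rw [Nat.Ioc_succ_singleton, Finset.sum_singleton]
    simp [hF0]
  have hΦ0 : ∀ n : ℕ, pp F g n n = 0 := by
    intro n
    rw [pp, Finset.Ioc_self, Finset.sum_empty]
  have hsew := sewing (pp F g) ω q (le_of_lt hq) hωsup hδ hΦ1 hΦ0
  -- global bound on ω
  set S : ℝ≥0∞ := ∑ i : Fin I, VvarN (p₁ i) (Fi i) * VvarN (p₀ i) (Pt i) with hS
  have hωglob : ∀ s t : ℕ, ω s t ≤ (I:ℝ≥0∞) * S ^ ρ := by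
    intro s t
    rw [hω]
    simp only
    calc ∑ i : Fin I, ωi i s t ≤ ∑ _i : Fin I, S ^ ρ := by
          refine Finset.sum_le_sum fun i _ => ?_
          rw [hωi]
          simp only
          calc (Vloc (p₁ i) (Fi i) s t) ^ (ρ / p₁ i) * (Vloc (p₀ i) (Pt i) s t) ^ (ρ / p₀ i)
              ≤ ((VvarN (p₁ i) (Fi i)) ^ (p₁ i)) ^ (ρ / p₁ i)
                * ((VvarN (p₀ i) (Pt i)) ^ (p₀ i)) ^ (ρ / p₀ i) :=
                mul_le_mul'
                  (ENNReal.rpow_le_rpow (Vloc_le_VvarN (p₁ i) (hp i).2.1 (Fi i) s t)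
                    (le_of_lt (hθpos i)))
                  (ENNReal.rpow_le_rpow (Vloc_le_VvarN (p₀ i) (hp i).1 (Pt i) s t)
                    (le_of_lt (hθ0pos i)))
          _ = (VvarN (p₁ i) (Fi i)) ^ ρ * (VvarN (p₀ i) (Pt i)) ^ ρ := by
                rw [← ENNReal.rpow_mul, ← ENNReal.rpow_mul]
                congr 2
                · rw [mul_comm, div_mul_cancel₀ ρ (ne_of_gt (hp i).2.1)]
                · rw [mul_comm, div_mul_cancel₀ ρ (ne_of_gt (hp i).1)]
          _ = (VvarN (p₁ i) (Fi i) * VvarN (p₀ i) (Pt i)) ^ ρ :=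
                (ENNReal.mul_rpow_of_nonneg _ _ (le_of_lt hρ)).symm
          _ ≤ S ^ ρ := by
                refine ENNReal.rpow_le_rpow ?_ (le_of_lt hρ)
                rw [hS]
                exact Finset.single_le_sum
                  (f := fun j => VvarN (p₁ j) (Fi j) * VvarN (p₀ j) (Pt j))
                  (fun j _ => zero_le) (Finset.mem_univ i)
    _ = (I:ℝ≥0∞) * S ^ ρ := by
          rw [Finset.sum_const, Finset.card_univ, Fintype.card_fin, nsmul_eq_mul]
  -- conclude
  rw [VvarN]
  refine iSup_le fun L => iSup_le fun u => iSup_le fun hu => ?_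
  set w : ℕ → ℕ := fun n => u ⟨min n L, by omega⟩ with hw
  have hwmono : Monotone w := by
    intro a b hab
    exact hu (by simp [Fin.le_def]; omega)
  have hsum1 : ∑ l : Fin L, (ENNReal.ofReal |pp F g (u l.castSucc) (u l.succ)|) ^ ρ
      = ∑ l ∈ Finset.range L, (ENNReal.ofReal |pp F g (w l) (w (l+1))|) ^ ρ := by
    rw [← Fin.sum_univ_eq_sum_range (fun m => (ENNReal.ofReal |pp F g (w m) (w (m+1))|) ^ ρ) L]
    refine Finset.sum_congr rfl fun l _ => ?_
    have hlL := l.isLt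
    have e1 : w l.val = u l.castSucc := by
      rw [hw]; beta_reduce; congr 1; apply Fin.ext
      simp only [Fin.coe_castSucc]; omega
    have e2 : w (l.val+1) = u l.succ := by
      rw [hw]; beta_reduce; congr 1; apply Fin.ext
      simp only [Fin.val_succ]; omega
    rw [e1, e2]
  rw [hsum1]
  calc (∑ l ∈ Finset.range L, (ENNReal.ofReal |pp F g (w l) (w (l+1))|) ^ ρ) ^ (1/ρ)
      ≤ (∑ l ∈ Finset.range L, (K * ω (w l) (w (l+1)) ^ q) ^ ρ) ^ (1/ρ) := by
        refine ENNReal.rpow_le_rpow (Finset.sum_le_sum fun l _ => ?_) (by positivity)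
        exact ENNReal.rpow_le_rpow (hsew (w l) (w (l+1)) (hwmono (by omega)))
          (le_of_lt hρ)
  _ = (K ^ ρ * ∑ l ∈ Finset.range L, ω (w l) (w (l+1))) ^ (1/ρ) := by
        congr 1
        rw [Finset.mul_sum]
        refine Finset.sum_congr rfl fun l _ => ?_
        rw [ENNReal.mul_rpow_of_nonneg _ _ (le_of_lt hρ), ← ENNReal.rpow_mul, hqρ,
          ENNReal.rpow_one]
  _ ≤ (K ^ ρ * ((I:ℝ≥0∞) * S ^ ρ)) ^ (1/ρ) := by
        refine ENNReal.rpow_le_rpow ?_ (by positivity)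
        refine mul_le_mul' le_rfl ?_
        exact (superadd_chain hωsup w hwmono L).trans (hωglob _ _)
  _ = K * (I:ℝ≥0∞) ^ q * S := by
        rw [ENNReal.mul_rpow_of_nonneg _ _ (by positivity), ENNReal.mul_rpow_of_nonneg _ _
          (by positivity), ← ENNReal.rpow_mul, ← ENNReal.rpow_mul,
          mul_one_div, div_self (ne_of_gt hρ), ENNReal.rpow_one, ENNReal.rpow_one, hqdef]
        ring
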